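/- arXiv:2403.01072 — 2 statements merged into one kernel-verified Lean document; each statement's English description precedes it below -/
import Mathlib

section
/- Suppose g : U × U → ℝ satisfies: (i) for each fixed u, v ↦ g(u, v) is λ-strongly convex with minimizer A(u) ∈ U; (ii) |g(u, v) − g(u', v)| ≤ K‖u − u'‖ for all u, u', v (Lipschitz in the first argument uniformly in the second). Let u_PS satisfy A(u_PS) = u_PS and let u_PO ∈ argmin_{u∈U} g(u, u). Then ‖u_PS − u_PO‖ ≤ 2K/λ. -/
open Filter Topology

/-- Quadratic growth at a minimizer of a strongly convex function. -/
lemma strongConvexOn_quadratic_growth {E : Type*} [NormedAddCommGroup E] [NormedSpace ℝ E]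
    {U : Set E} {f : E → ℝ} {lam : ℝ}
    (hsc : StrongConvexOn U lam f) {x y : E} (hx : x ∈ U) (hy : y ∈ U)
    (hmin : IsMinOn f U x) :
    f x + lam / 2 * ‖y - x‖ ^ 2 ≤ f y := by
  set c : ℝ := lam / 2 * ‖y - x‖ ^ 2 with hc
  have key : ∀ n : ℕ, (1 - 1 / (n + 1 : ℝ)) * c ≤ f y - f x := by
    intro n
    set t : ℝ := 1 / (n + 1 : ℝ) with ht
    have ht0 : 0 < t := by positivity
    have ht1 : t ≤ 1 := by
      rw [ht]
      rw [div_le_one (by positivity)]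
      linarith [Nat.cast_nonneg (α := ℝ) n]
    have hmem : t • y + (1 - t) • x ∈ U :=
      hsc.1 hy hx ht0.le (by linarith) (by ring)
    have h1 : f x ≤ f (t • y + (1 - t) • x) := hmin hmem
    have h2 := hsc.2 hy hx ht0.le (show (0:ℝ) ≤ 1 - t by linarith) (by ring)
    simp only [smul_eq_mul] at h2
    have : f x ≤ t * f y + (1 - t) * f x - t * (1 - t) * c := le_trans h1 h2
    have h3 : t * ((1 - t) * c) ≤ t * (f y - f x) := by nlinarith
    have := (mul_le_mul_iff_right₀ ht0).mp h3
    linarith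
  have hlim : Tendsto (fun n : ℕ => (1 - 1 / (n + 1 : ℝ)) * c) atTop (𝓝 c) := by
    have : Tendsto (fun n : ℕ => 1 / (n + 1 : ℝ)) atTop (𝓝 0) :=
      tendsto_one_div_add_atTop_nhds_zero_nat
    have := ((tendsto_const_nhds (x := (1:ℝ))).sub this).mul (tendsto_const_nhds (x := c))
    simpa using this
  have : c ≤ f y - f x := le_of_tendsto' hlim key
  linarith

/-- Theorem 4, abstracted: if `v ↦ g u v` is `λ`-strongly convex on `U` with
minimizer `A u ∈ U`, and `g` is `K`-Lipschitz in its first argument uniformly in the second,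
then the performatively stable control `u_PS` (fixed point of `A`) and the performatively
optimal control `u_PO` (minimizer of `u ↦ g u u` over `U`) satisfy `‖u_PS − u_PO‖ ≤ 2K/λ`. -/
theorem stable_close_to_optimal
    {d : ℕ} (U : Set (EuclideanSpace ℝ (Fin d)))
    (g : EuclideanSpace ℝ (Fin d) → EuclideanSpace ℝ (Fin d) → ℝ)
    (lam K : ℝ) (hlam : 0 < lam) (hK : 0 ≤ K)
    (A : EuclideanSpace ℝ (Fin d) → EuclideanSpace ℝ (Fin d))
    (hsc : ∀ u, StrongConvexOn U lam (fun v => g u v))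
    (hA : ∀ u, A u ∈ U ∧ IsMinOn (fun v => g u v) U (A u))
    (hlip : ∀ u u' v, |g u v - g u' v| ≤ K * ‖u - u'‖)
    (uPS : EuclideanSpace ℝ (Fin d)) (hPSmem : uPS ∈ U) (hPS : A uPS = uPS)
    (uPO : EuclideanSpace ℝ (Fin d)) (hPOmem : uPO ∈ U)
    (hPO : ∀ v ∈ U, g uPO uPO ≤ g v v) :
    ‖uPS - uPO‖ ≤ 2 * K / lam := by
  have hminPS : IsMinOn (fun v => g uPS v) U uPS := by
    have := (hA uPS).2; rwa [hPS] at this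
  -- quadratic growth
  have hqg : g uPS uPS + lam / 2 * ‖uPO - uPS‖ ^ 2 ≤ g uPS uPO :=
    strongConvexOn_quadratic_growth (hsc uPS) hPSmem hPOmem hminPS
  -- g uPO uPO ≤ g uPS uPS
  have h1 : g uPO uPO ≤ g uPS uPS := hPO uPS hPSmem
  -- Lipschitz bound
  have h2 : g uPS uPO - g uPO uPO ≤ K * ‖uPS - uPO‖ :=
    le_trans (le_abs_self _) (hlip uPS uPO uPO)
  have hnorm : ‖uPO - uPS‖ = ‖uPS - uPO‖ := by rw [norm_sub_rev]
  rw [hnorm] at hqg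
  have key : lam / 2 * ‖uPS - uPO‖ ^ 2 ≤ K * ‖uPS - uPO‖ := by linarith
  rcases eq_or_lt_of_le (norm_nonneg (uPS - uPO)) with h0 | h0
  · rw [← h0]; positivity
  · rw [le_div_iff₀ hlam]
    nlinarith
end

section
/- Let (X, ‖·‖) be a normed space, A : X → X an α-contraction with α < 1/2 and fixed point u*, and let Â_i : X → X be maps satisfying ‖Â_i(u) − A(u)‖ ≤ α·δ for all u and all i, for some δ > 0. Define u_{i+1} = Â_i(u_i). Then for all i, ‖u_i − u*‖ ≤ max{(2α)^i ‖u_0 − u*‖, δ}. -/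
/-- perturbed fixed-point iteration, used in Theorem 5: if `A` is an
`α`-contraction with `α < 1/2` and fixed point `u*`, and each approximate update `Â i`
deviates from `A` by at most `α·δ`, then the inexact iterates satisfy
`‖u_i − u*‖ ≤ max{(2α)^i ‖u₀ − u*‖, δ}`. -/
theorem perturbed_fixed_point_iteration
    {X : Type*} [NormedAddCommGroup X] [NormedSpace ℝ X]
    (A : X → X) (α : ℝ) (hα0 : 0 ≤ α) (hα : α < 1 / 2)
    (hA : ∀ x y, ‖A x - A y‖ ≤ α * ‖x - y‖)
    (ustar : X) (hfix : A ustar = ustar)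
    (Ahat : ℕ → X → X) (δ : ℝ) (hδ : 0 < δ)
    (hAhat : ∀ i u, ‖Ahat i u - A u‖ ≤ α * δ)
    (u : ℕ → X) (hiter : ∀ i, u (i + 1) = Ahat i (u i)) :
    ∀ i : ℕ, ‖u i - ustar‖ ≤ max ((2 * α) ^ i * ‖u 0 - ustar‖) δ := by
  intro i
  induction i with
  | zero => simp
  | succ i ih =>
    have key : ‖u (i + 1) - ustar‖ ≤ α * δ + α * ‖u i - ustar‖ := by
      calc ‖u (i + 1) - ustar‖
          = ‖(Ahat i (u i) - A (u i)) + (A (u i) - A ustar)‖ := by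
            rw [hiter i, hfix]; congr 1; abel
        _ ≤ ‖Ahat i (u i) - A (u i)‖ + ‖A (u i) - A ustar‖ := norm_add_le _ _
        _ ≤ α * δ + α * ‖u i - ustar‖ := add_le_add (hAhat i (u i)) (hA _ _)
    rcases le_or_gt ‖u i - ustar‖ δ with h | h
    · refine le_max_of_le_right ?_
      calc ‖u (i + 1) - ustar‖ ≤ α * δ + α * ‖u i - ustar‖ := key
        _ ≤ α * δ + α * δ := by nlinarith
        _ ≤ δ := by nlinarith
    · have h2 : ‖u (i + 1) - ustar‖ ≤ 2 * α * ‖u i - ustar‖ := by nlinarith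
      rcases le_max_iff.mp ih with h3 | h3
      · refine le_max_of_le_left ?_
        calc ‖u (i + 1) - ustar‖ ≤ 2 * α * ‖u i - ustar‖ := h2
          _ ≤ 2 * α * ((2 * α) ^ i * ‖u 0 - ustar‖) := by nlinarith
          _ = (2 * α) ^ (i + 1) * ‖u 0 - ustar‖ := by ring
      · linarith
end
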